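/- Let n ≥ 2 be an integer and p ∈ (0, 1/n); set q = (n-1)·p, r = 1 - n·p, u = √((n·p + 1)² - 4·p), w₁ = (1 - n·p - u)/2, w₂ = (1 - n·p + u)/2, a = -(1 - 2·p + n·p - u)/(u·(1 - n·p - u)), and b = (1 - 2·p + n·p + u)/(u·(1 - n·p + u)). If h : ℕ → ℝ satisfies h(1) = 1, h(2) = q + r, and h(m) = r·h(m-1) + q·h(m-2) for all m ≥ 3, then h(m) = a·w₁^m + b·w₂^m for all m ≥ 1. -/

import Mathlib

/-- Closed form for the solution of the success-probability recursion
h(m) = r·h(m-1) + q·h(m-2), h(1) = 1, h(2) = q + r. -/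
theorem stmt_10 (n : ℕ) (hn : 2 ≤ n) (p : ℝ) (hp : p ∈ Set.Ioo (0 : ℝ) (1 / (n : ℝ)))
    (q r u w₁ w₂ a b : ℝ)
    (hq : q = ((n : ℝ) - 1) * p) (hr : r = 1 - (n : ℝ) * p)
    (hu : u = Real.sqrt (((n : ℝ) * p + 1) ^ 2 - 4 * p))
    (hw₁ : w₁ = (1 - (n : ℝ) * p - u) / 2) (hw₂ : w₂ = (1 - (n : ℝ) * p + u) / 2)
    (ha : a = -(1 - 2 * p + (n : ℝ) * p - u) / (u * (1 - (n : ℝ) * p - u)))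
    (hb : b = (1 - 2 * p + (n : ℝ) * p + u) / (u * (1 - (n : ℝ) * p + u)))
    (h : ℕ → ℝ) (h1 : h 1 = 1) (h2 : h 2 = q + r)
    (hrec : ∀ m : ℕ, 3 ≤ m → h m = r * h (m - 1) + q * h (m - 2)) :
    ∀ m : ℕ, 1 ≤ m → h m = a * w₁ ^ m + b * w₂ ^ m := by
  obtain ⟨hp0, hp1⟩ := hp
  have hn2 : (2 : ℝ) ≤ (n : ℝ) := by exact_mod_cast hn
  have hnpos : (0:ℝ) < (n:ℝ) := by linarith
  have hnp : (n : ℝ) * p < 1 := by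
    have := (lt_div_iff₀ hnpos).mp hp1
    linarith [mul_comm p (n:ℝ)]
  have hdpos : 0 < ((n : ℝ) * p + 1) ^ 2 - 4 * p := by nlinarith
  have hupos : 0 < u := by rw [hu]; exact Real.sqrt_pos.mpr hdpos
  have hu2 : u ^ 2 = ((n : ℝ) * p + 1) ^ 2 - 4 * p := by
    rw [hu, sq, Real.mul_self_sqrt hdpos.le]
  have hqpos : 0 < q := by rw [hq]; nlinarith
  have hprod : w₁ * w₂ = -q := by
    rw [hw₁, hw₂, hq]; linear_combination (-(1:ℝ)/4) * hu2
  have hw1ne : w₁ ≠ 0 := by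
    intro h0; rw [h0, zero_mul] at hprod; linarith
  have hw2ne : w₂ ≠ 0 := by
    intro h0; rw [h0, mul_zero] at hprod; linarith
  have hd1 : (1 - (n : ℝ) * p - u) ≠ 0 := by
    intro h0; apply hw1ne; rw [hw₁, h0]; norm_num
  have hd2 : (1 - (n : ℝ) * p + u) ≠ 0 := by
    intro h0; apply hw2ne; rw [hw₂, h0]; norm_num
  have hune : u ≠ 0 := ne_of_gt hupos
  have e1 : w₁ ^ 2 = r * w₁ + q := by
    rw [hw₁, hr, hq]; linear_combination ((1:ℝ)/4) * hu2
  have e2 : w₂ ^ 2 = r * w₂ + q := by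
    rw [hw₂, hr, hq]; linear_combination ((1:ℝ)/4) * hu2
  have aw1 : a * w₁ = -(1 - 2 * p + (n : ℝ) * p - u) / (2 * u) := by
    rw [ha, hw₁, div_mul_div_comm, eq_div_iff (mul_ne_zero two_ne_zero hune), div_mul_eq_mul_div, div_eq_iff (mul_ne_zero (mul_ne_zero hune hd1) two_ne_zero)]; ring
  have bw2 : b * w₂ = (1 - 2 * p + (n : ℝ) * p + u) / (2 * u) := by
    rw [hb, hw₂, div_mul_div_comm, eq_div_iff (mul_ne_zero two_ne_zero hune), div_mul_eq_mul_div, div_eq_iff (mul_ne_zero (mul_ne_zero hune hd2) two_ne_zero)]; ring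
  have base1 : a * w₁ ^ 1 + b * w₂ ^ 1 = 1 := by
    rw [pow_one, pow_one, aw1, bw2]; field_simp; ring
  have base2 : a * w₁ ^ 2 + b * w₂ ^ 2 = q + r := by
    have t1 : a * w₁ ^ 2 = (a * w₁) * w₁ := by ring
    have t2 : b * w₂ ^ 2 = (b * w₂) * w₂ := by ring
    rw [t1, t2, aw1, bw2, hw₁, hw₂, hq, hr]
    field_simp
    ring
  have key : ∀ m : ℕ, h (m + 1) = a * w₁ ^ (m + 1) + b * w₂ ^ (m + 1) := by
    intro m
    induction m using Nat.strong_induction_on with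
    | _ m ih =>
      match m, ih with
      | 0, _ => simpa [h1] using base1.symm
      | 1, _ => simpa [h2] using base2.symm
      | (k+2), ih =>
        have hr3 := hrec (k + 3) (by omega)
        have m1 : k + 3 - 1 = k + 2 := by omega
        have m2 : k + 3 - 2 = k + 1 := by omega
        rw [m1, m2] at hr3
        have i1 := ih (k + 1) (by omega)
        have i2 := ih k (by omega)
        show h (k + 3) = a * w₁ ^ (k + 3) + b * w₂ ^ (k + 3)
        rw [hr3, i1, i2]
        have p1 : w₁ ^ (k + 3) = w₁ ^ (k + 1) * w₁ ^ 2 := by ring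
        have p2 : w₂ ^ (k + 3) = w₂ ^ (k + 1) * w₂ ^ 2 := by ring
        rw [p1, p2, e1, e2]; ring
  intro m hm
  obtain ⟨k, rfl⟩ := Nat.exists_eq_add_of_le hm
  rw [add_comm]
  exact key k
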